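/- Fix a positive integer d and v ∈ I(d). (1) If 𝔖 is a monomial in ON(v) and α ∈ 𝔖, then there exists a v-chain C in 𝔖 with tail α such that odepth_𝔖(α) = odepth_C(α). (2) For elements α > γ of a v-chain C (not necessarily consecutive), odepth_C(α) < odepth_C(γ). (3) For elements α > γ of a monomial 𝔖 in ON(v), odepth_𝔖(α) < odepth_𝔖(γ). (4) No two comparable elements of a monomial in ON(v) have the same o-depth in it. -/

import Mathlib

namespace OG

/-- `star d k = k* = 2d+1-k`. -/
def star (d k : ℕ) : ℕ := 2 * d + 1 - k

/-- `I(d,2d)`: the set of `d`-element subsets of `{1,…,2d}`. -/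
def Idn (d : ℕ) : Set (Finset ℕ) :=
  {v | v.card = d ∧ ∀ k ∈ v, 1 ≤ k ∧ k ≤ 2 * d}

/-- The partial order on `I(d,2d)`: entrywise comparison of increasing enumerations. -/
def leI (x y : Finset ℕ) : Prop :=
  List.Forall₂ (· ≤ ·) (x.sort (· ≤ ·)) (y.sort (· ≤ ·))

/-- `I(d)`: elements of `I(d,2d)` containing exactly one of `k`, `k*` for each `k`,
with evenly many entries exceeding `d`. -/
def Iset (d : ℕ) : Set (Finset ℕ) :=
  {v | v ∈ Idn d ∧ (∀ k, 1 ≤ k → k ≤ 2 * d → (k ∈ v ↔ star d k ∉ v)) ∧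
       Even ((v.filter (fun k => d < k)).card)}

/-- membership in `N(v)`. -/
def inN (d : ℕ) (v : Finset ℕ) (p : ℕ × ℕ) : Prop :=
  1 ≤ p.1 ∧ p.1 ≤ 2 * d ∧ 1 ≤ p.2 ∧ p.2 ≤ 2 * d ∧ p.1 ∉ v ∧ p.2 ∈ v ∧ p.2 < p.1

/-- membership in `OR(v)`. -/
def inOR (d : ℕ) (v : Finset ℕ) (p : ℕ × ℕ) : Prop :=
  1 ≤ p.1 ∧ p.1 ≤ 2 * d ∧ 1 ≤ p.2 ∧ p.2 ≤ 2 * d ∧ p.1 ∉ v ∧ p.2 ∈ v ∧ p.1 < star d p.2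

/-- membership in `ON(v) = OR(v) ∩ N(v)`. -/
def inON (d : ℕ) (v : Finset ℕ) (p : ℕ × ℕ) : Prop := inN d v p ∧ inOR d v p

/-- membership in the diagonal `D(v)`. -/
def inDiag (d : ℕ) (v : Finset ℕ) (p : ℕ × ℕ) : Prop :=
  p.1 ∉ v ∧ p.2 ∈ v ∧ p.1 = star d p.2

instance (d : ℕ) (v : Finset ℕ) : DecidablePred (inN d v) := fun p => by
  unfold inN; infer_instance

instance (d : ℕ) (v : Finset ℕ) : DecidablePred (inOR d v) := fun p => by
  unfold inOR; infer_instance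

instance (d : ℕ) (v : Finset ℕ) : DecidablePred (inON d v) := fun p => by
  unfold inON; infer_instance

instance (d : ℕ) (v : Finset ℕ) : DecidablePred (inDiag d v) := fun p => by
  unfold inDiag; infer_instance

/-- `(R,C) > (r,c)` iff `R > r` and `C < c`. -/
def pgt (A B : ℕ × ℕ) : Prop := B.1 < A.1 ∧ A.2 < B.2

instance : DecidableRel pgt := fun A B => by unfold pgt; infer_instance

/-- `(R,C)` dominates `(r,c)` iff `R ≥ r` and `C ≤ c`. -/
def pdom (A B : ℕ × ℕ) : Prop := B.1 ≤ A.1 ∧ A.2 ≤ B.2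

/-- vertical projection `p_v(r,c) = (c*,c)`. -/
def pv (d : ℕ) (α : ℕ × ℕ) : ℕ × ℕ := (star d α.2, α.2)

/-- horizontal projection `p_h(r,c) = (r,r*)`. -/
def ph (d : ℕ) (α : ℕ × ℕ) : ℕ × ℕ := (α.1, star d α.1)

/-- `(r,c)^# = (c*,r*)`. -/
def hash (d : ℕ) (α : ℕ × ℕ) : ℕ × ℕ := (star d α.2, star d α.1)

/-- A `v`-chain: a strictly decreasing (under `pgt`) list of elements of `ON(v)`. -/
def IsVChain (d : ℕ) (v : Finset ℕ) (C : List (ℕ × ℕ)) : Prop :=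
  C.Chain' pgt ∧ ∀ α ∈ C, inON d v α

/-- Two consecutive elements `(r,c) > (R,C)` of a `v`-chain are connected
if `r* ≥ C` and `R > r*`. -/
def Connected (d : ℕ) (α β : ℕ × ℕ) : Prop :=
  β.2 ≤ star d α.1 ∧ star d α.1 < β.1

instance (d : ℕ) : ∀ α β, Decidable (Connected d α β) := fun α β => by
  unfold Connected; infer_instance

/-- The connected components of a `v`-chain. -/
def components (d : ℕ) (C : List (ℕ × ℕ)) : List (List (ℕ × ℕ)) :=
  C.splitBy (fun a b => decide (Connected d a b))

/-- The three possible types of an element of a `v`-chain. -/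
inductive VType | V | H | S
deriving DecidableEq

/-- The type of an element `α` of a `v`-chain `C`: type V if `α` is not the last element
of its connected component or that component has even cardinality; otherwise type H if
`p_h(α) ∈ N(v)` (i.e. `r > r*`) and type S if not. -/
def typeOf (d : ℕ) (C : List (ℕ × ℕ)) (α : ℕ × ℕ) : VType :=
  match (components d C).find? (fun g => decide (α ∈ g)) with
  | some g =>
      if g.getLast? = some α ∧ Odd g.length then
        (if star d α.1 < α.1 then VType.H else VType.S)
      else VType.V
  | none => VType.V

/-- `𝔖_{C,α}`. -/
def SCa (d : ℕ) (C : List (ℕ × ℕ)) (α : ℕ × ℕ) : Multiset (ℕ × ℕ) :=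
  match typeOf d C α with
  | VType.V => {pv d α}
  | VType.H => {pv d α, ph d α}
  | VType.S => {α, hash d α}

/-- `𝔖_C`: the multiset union of the `𝔖_{C,α}` over `α ∈ C`. -/
def SC (d : ℕ) (C : List (ℕ × ℕ)) : Multiset (ℕ × ℕ) :=
  (C.map (fun α => SCa d C α)).sum

/-- `q_{C,α}`. -/
def qCa (d : ℕ) (C : List (ℕ × ℕ)) (α : ℕ × ℕ) : ℕ × ℕ :=
  match typeOf d C α with
  | VType.S => α
  | _ => pv d α

/-- A strictly decreasing chain of elements of the monomial `S`. -/
def IsChainIn (S : Multiset (ℕ × ℕ)) (L : List (ℕ × ℕ)) : Prop :=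
  L.Chain' pgt ∧ ∀ β ∈ L, β ∈ S

/-- The depth of `α` in a monomial `S` of `N(v)`: the maximal length of a strictly
decreasing chain of elements of `S` ending at `α`. -/
noncomputable def depth (S : Multiset (ℕ × ℕ)) (α : ℕ × ℕ) : ℕ :=
  sSup {k | ∃ L, IsChainIn S L ∧ L.getLast? = some α ∧ L.length = k}

/-- The o-depth of `α` in a `v`-chain `C`: the depth of `q_{C,α}` in `𝔖_C`. -/
noncomputable def odepthC (d : ℕ) (C : List (ℕ × ℕ)) (α : ℕ × ℕ) : ℕ :=
  depth (SC d C) (qCa d C α)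

/-- The o-depth of `α` in a monomial `S` of `ON(v)`: the maximum of `odepthC` over
all `v`-chains in `S` containing `α`. -/
noncomputable def odepthM (d : ℕ) (v : Finset ℕ) (S : Multiset (ℕ × ℕ)) (α : ℕ × ℕ) : ℕ :=
  sSup {k | ∃ C, IsVChain d v C ∧ (∀ β ∈ C, β ∈ S) ∧ α ∈ C ∧ odepthC d C α = k}

/-- A distinguished subset of `N(v)`. -/
def Distinguished (d : ℕ) (v : Finset ℕ) (S : Finset (ℕ × ℕ)) : Prop :=
  (∀ p ∈ S, inN d v p) ∧
  ∀ A ∈ S, ∀ B ∈ S, A ≠ B →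
    A.1 ≠ B.1 ∧ A.2 ≠ B.2 ∧ (B.1 < A.1 → (B.1 < A.2 ∨ A.2 < B.2))

/-- The element of `I(d,2d)` attached to a distinguished subset `S` of `N(v)`:
remove from `v` the column indices of elements of `S` and add their row indices. -/
def toW (v : Finset ℕ) (S : Finset (ℕ × ℕ)) : Finset ℕ :=
  (v \ S.image Prod.snd) ∪ S.image Prod.fst

/-- `w(C) = w_C`, the element of `I(d,2d)` attached to the `v`-chain `C` via the
distinguished subset `𝔖_C`. -/
def wC (d : ℕ) (v : Finset ℕ) (C : List (ℕ × ℕ)) : Finset ℕ :=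
  toW v (SC d C).toFinset

/-- `w` ortho-dominates a monomial `S` in `ON(v)`: `w ≥ w(C)` for every `v`-chain
`C` contained in `S`. -/
def ODominates (d : ℕ) (v w : Finset ℕ) (S : Multiset (ℕ × ℕ)) : Prop :=
  ∀ C : List (ℕ × ℕ), IsVChain d v C → (∀ β ∈ C, β ∈ S) → leI (wC d v C) w

/-- `x` dominates a monomial `S` in `N(v)` (in the sense of the Grassmannian case):
`x ≥ w_L` for every strictly decreasing chain `L` contained in `S`. -/
def Dominates (d : ℕ) (v x : Finset ℕ) (S : Multiset (ℕ × ℕ)) : Prop :=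
  ∀ L : List (ℕ × ℕ), L.Chain' pgt → (∀ β ∈ L, β ∈ S) → leI (toW v L.toFinset) x

/-- The `v`-degree of `θ`: half the cardinality of `v \ θ`. -/
def vdeg (v θ : Finset ℕ) : ℕ := (v \ θ).card / 2

/-- the element next to `α` in the list `C`. -/
def nextInC (C : List (ℕ × ℕ)) (α : ℕ × ℕ) : Option (ℕ × ℕ) :=
  C[C.idxOf α + 1]?

/-- The critical element of a `v`-chain: its first element whose horizontal projection
does not belong to `N(v)` (i.e. with `r ≤ r*`). -/
def critical (d : ℕ) (C : List (ℕ × ℕ)) : Option (ℕ × ℕ) :=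
  C.find? (fun x => decide (x.1 ≤ star d x.1))

/-- `α` is the last element of its connected component in `C`. -/
def isCompLast (d : ℕ) (C : List (ℕ × ℕ)) (α : ℕ × ℕ) : Prop :=
  ∃ g ∈ components d C, g.getLast? = some α

/-- The condition (*): `α` has type H in `C` and `p_h(α) ≯ β'` for some `β' ∈ 𝔖_{C,β}`. -/
def starCond (d : ℕ) (C : List (ℕ × ℕ)) (α β : ℕ × ℕ) : Prop :=
  typeOf d C α = VType.H ∧ ∃ β' ∈ SCa d C β, ¬ pgt (ph d α) β'

/-- A standard monomial in `I(d)`: a weakly decreasing sequence of elements of `I(d)`. -/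
def IsStdMon (d : ℕ) (L : List (Finset ℕ)) : Prop :=
  (∀ θ ∈ L, θ ∈ Iset d) ∧ L.Chain' (fun a b => leI b a)

/-- A standard monomial is `w`-dominated if `w ≥ θ₁`. -/
def WDominated (w : Finset ℕ) (L : List (Finset ℕ)) : Prop :=
  ∀ θ, L.head? = some θ → leI θ w

/-- A standard monomial is `v`-compatible if each member is comparable with `v`
and distinct from `v`. -/
def VCompatible (v : Finset ℕ) (L : List (Finset ℕ)) : Prop :=
  ∀ θ ∈ L, θ ≠ v ∧ (leI θ v ∨ leI v θ)

/-- The degree of a standard monomial: the sum of the `v`-degrees of its members. -/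
def stdDeg (v : Finset ℕ) (L : List (Finset ℕ)) : ℕ :=
  (L.map (fun θ => vdeg v θ)).sum

end OG


section Aux
open OG List

/-! ### pgt order basics -/

theorem pgt_trans' {a b c : ℕ × ℕ} (h1 : pgt a b) (h2 : pgt b c) : pgt a c :=
  ⟨lt_trans h2.1 h1.1, lt_trans h1.2 h2.2⟩

instance : IsTrans (ℕ × ℕ) pgt := ⟨fun _ _ _ => pgt_trans'⟩

theorem pgt_ne {a b : ℕ × ℕ} (h : pgt a b) : a ≠ b := fun he => by
  rcases h with ⟨h1, _⟩; rw [he] at h1; exact lt_irrefl _ h1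

theorem pairwise_of_chain' {C : List (ℕ × ℕ)} (h : C.Chain' pgt) : C.Pairwise pgt :=
  List.isChain_iff_pairwise.mp h

theorem nodup_of_chain' {C : List (ℕ × ℕ)} (h : C.Chain' pgt) : C.Nodup :=
  (pairwise_of_chain' h).imp pgt_ne

theorem pairwise_or {X : Type*} {R : X → X → Prop} :
    ∀ {l : List X}, l.Pairwise R → ∀ {x y}, x ∈ l → y ∈ l → x ≠ y → R x y ∨ R y x := by
  intro l hl
  induction l with
  | nil => intro x y hx; cases hx
  | cons a t ih =>
    rw [List.pairwise_cons] at hl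
    intro x y hx hy hne
    rcases List.mem_cons.mp hx with rfl | hx' <;> rcases List.mem_cons.mp hy with rfl | hy'
    · exact absurd rfl hne
    · exact Or.inl (hl.1 y hy')
    · exact Or.inr (hl.1 x hx')
    · exact ih hl.2 hx' hy' hne

/-! ### splitBy snoc machinery -/

theorem loop_snoc {α : Type*} (r : α → α → Bool) (γ : α) :
    ∀ (l : List α) (a : α) (g : List α) (gs : List (List α)),
    ∃ GS G',
      List.splitBy.loop r l a g gs = GS ++ [G' ++ [(a::l).getLast (List.cons_ne_nil a l)]] ∧
      List.splitBy.loop r (l ++ [γ]) a g gs =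
        (if r ((a::l).getLast (List.cons_ne_nil a l)) γ then
          GS ++ [G' ++ [(a::l).getLast (List.cons_ne_nil a l), γ]]
         else GS ++ [G' ++ [(a::l).getLast (List.cons_ne_nil a l)], [γ]]) := by
  intro l
  induction l with
  | nil =>
    intro a g gs
    refine ⟨gs.reverse, g.reverse, ?_, ?_⟩
    · simp [List.splitBy.loop]
    · by_cases h : r a γ = true
      · simp [List.splitBy.loop, h]
      · simp only [Bool.not_eq_true] at h
        simp [List.splitBy.loop, h]
  | cons b l ih =>
    intro a g gs
    have hlast : (a :: b :: l).getLast (List.cons_ne_nil _ _)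
        = (b :: l).getLast (List.cons_ne_nil _ _) := List.getLast_cons (List.cons_ne_nil _ _)
    by_cases h : r a b = true
    · obtain ⟨GS, G', h1, h2⟩ := ih b (a :: g) gs
      refine ⟨GS, G', ?_, ?_⟩
      · show List.splitBy.loop r (b :: l) a g gs = _
        rw [List.splitBy.loop, h, h1, hlast]
      · show List.splitBy.loop r (b :: l ++ [γ]) a g gs = _
        rw [List.cons_append, List.splitBy.loop, h, h2, hlast]
    · simp only [Bool.not_eq_true] at h
      obtain ⟨GS, G', h1, h2⟩ := ih b [] ((a :: g).reverse :: gs)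
      refine ⟨GS, G', ?_, ?_⟩
      · show List.splitBy.loop r (b :: l) a g gs = _
        rw [List.splitBy.loop, h, h1, hlast]
      · show List.splitBy.loop r (b :: l ++ [γ]) a g gs = _
        rw [List.cons_append, List.splitBy.loop, h, h2, hlast]

theorem components_snoc' (d : ℕ) (C₀ : List (ℕ × ℕ)) (L γ : ℕ × ℕ) :
    ∃ GS G', components d (C₀ ++ [L]) = GS ++ [G' ++ [L]] ∧
      components d ((C₀ ++ [L]) ++ [γ]) =
        if Connected d L γ then GS ++ [(G' ++ [L]) ++ [γ]] else GS ++ [G' ++ [L], [γ]] := by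
  cases C₀ with
  | nil =>
    obtain ⟨GS, G', h1, h2⟩ := loop_snoc (fun a b => decide (Connected d a b)) γ [] L [] []
    simp only [List.nil_append, List.getLast_singleton] at h1 h2 ⊢
    refine ⟨GS, G', h1, ?_⟩
    have hrfl : components d [L, γ]
        = List.splitBy.loop (fun a b => decide (Connected d a b)) [γ] L [] [] := rfl
    rw [show ([L] ++ [γ] : List (ℕ × ℕ)) = [L, γ] from rfl, hrfl, h2]
    by_cases hc : Connected d L γ
    · simp [hc]
    · simp [hc]
  | cons a t =>
    have he : (a :: t) ++ [L] = a :: (t ++ [L]) := by simp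
    have hlast : (a :: (t ++ [L])).getLast (List.cons_ne_nil _ _) = L := by
      exact List.getLast_concat (l := a :: t)
    obtain ⟨GS, G', h1, h2⟩ := loop_snoc (fun a b => decide (Connected d a b)) γ (t ++ [L]) a [] []
    rw [hlast] at h1 h2
    refine ⟨GS, G', ?_, ?_⟩
    · rw [he]; exact h1
    · have hrfl : components d (a :: ((t ++ [L]) ++ [γ]))
          = List.splitBy.loop (fun a b => decide (Connected d a b)) ((t ++ [L]) ++ [γ]) a [] [] := rfl
      rw [show ((a :: t) ++ [L]) ++ [γ] = a :: ((t ++ [L]) ++ [γ]) by simp, hrfl, h2]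
      by_cases hc : Connected d L γ
      · rw [if_pos (show decide (Connected d L γ) = true by simpa using hc), if_pos hc]
        simp
      · rw [if_neg (show ¬ decide (Connected d L γ) = true by simpa using hc), if_neg hc]

/-! ### components / typeOf -/

theorem find?_mem_eq {gs : List (List (ℕ × ℕ))} {g : List (ℕ × ℕ)} {x : ℕ × ℕ}
    (hd : gs.Pairwise List.Disjoint) (hg : g ∈ gs) (hx : x ∈ g) :
    gs.find? (fun g' => decide (x ∈ g')) = some g := by
  induction gs with
  | nil => cases hg
  | cons g₀ t ih =>
    rw [List.pairwise_cons] at hd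
    rcases List.mem_cons.mp hg with rfl | hg'
    · exact List.find?_cons_of_pos (by simpa using hx)
    · have hx0 : x ∉ g₀ := fun h0 => hd.1 g hg' h0 hx
      rw [List.find?_cons_of_neg (by simpa using hx0)]
      exact ih hd.2 hg'

theorem components_disjoint {d : ℕ} {C : List (ℕ × ℕ)} (h : C.Nodup) :
    (components d C).Pairwise List.Disjoint := by
  have h2 : (components d C).flatten.Nodup := by
    unfold components
    rw [List.flatten_splitBy]
    exact h
  exact (List.nodup_flatten.mp h2).2

theorem mem_components {d : ℕ} {C : List (ℕ × ℕ)} {x : ℕ × ℕ} (hx : x ∈ C) :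
    ∃ g ∈ components d C, x ∈ g := by
  have : x ∈ (components d C).flatten := by
    unfold components
    rw [List.flatten_splitBy]
    exact hx
  exact List.mem_flatten.mp this

theorem typeOf_eq {d : ℕ} {C g : List (ℕ × ℕ)} {x : ℕ × ℕ} (hnd : C.Nodup)
    (hg : g ∈ components d C) (hx : x ∈ g) :
    typeOf d C x = if g.getLast? = some x ∧ Odd g.length then
      (if star d x.1 < x.1 then VType.H else VType.S) else VType.V := by
  unfold typeOf
  rw [find?_mem_eq (components_disjoint hnd) hg hx]

theorem typeOf_H {d : ℕ} {C : List (ℕ × ℕ)} {x : ℕ × ℕ} (h : typeOf d C x = VType.H) :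
    star d x.1 < x.1 := by
  unfold typeOf at h
  rcases hf : (components d C).find? (fun g => decide (x ∈ g)) with _ | g <;> simp only [hf] at h
  · exact absurd h (by simp)
  · split_ifs at h with h1 h2
    all_goals first | exact h2 | exact absurd h (by simp)

theorem typeOf_S {d : ℕ} {C : List (ℕ × ℕ)} {x : ℕ × ℕ} (h : typeOf d C x = VType.S) :
    ¬ star d x.1 < x.1 := by
  unfold typeOf at h
  rcases hf : (components d C).find? (fun g => decide (x ∈ g)) with _ | g <;> simp only [hf] at h
  · exact absurd h (by simp)
  · split_ifs at h with h1 h2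
    all_goals first | exact h2 | exact absurd h (by simp)

/-! ### SCa / qCa / SC -/

theorem SCa_eq_of_typeOf_eq {d : ℕ} {C C' : List (ℕ × ℕ)} {x : ℕ × ℕ}
    (h : typeOf d C x = typeOf d C' x) : SCa d C x = SCa d C' x := by
  unfold SCa; rw [h]

theorem qCa_eq_of_typeOf_eq {d : ℕ} {C C' : List (ℕ × ℕ)} {x : ℕ × ℕ}
    (h : typeOf d C x = typeOf d C' x) : qCa d C x = qCa d C' x := by
  unfold qCa; rw [h]

theorem qCa_eq_or (d : ℕ) (C : List (ℕ × ℕ)) (x : ℕ × ℕ) :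
    qCa d C x = pv d x ∨ qCa d C x = x := by
  cases h : typeOf d C x <;> simp [qCa, h]

theorem qCa_of_ne_S {d : ℕ} {C : List (ℕ × ℕ)} {x : ℕ × ℕ} (h : typeOf d C x ≠ VType.S) :
    qCa d C x = pv d x := by
  cases ht : typeOf d C x with
  | V => simp [qCa, ht]
  | H => simp [qCa, ht]
  | S => exact absurd ht h

theorem q_mem_SCa (d : ℕ) (C : List (ℕ × ℕ)) (x : ℕ × ℕ) : qCa d C x ∈ SCa d C x := by
  cases h : typeOf d C x <;> simp [qCa, SCa, h]

theorem mem_SCa_cases {d : ℕ} {C : List (ℕ × ℕ)} {α x : ℕ × ℕ} (hx : x ∈ SCa d C α) :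
    x = pv d α ∨ (x = ph d α ∧ star d α.1 < α.1) ∨
      ((x = α ∨ x = hash d α) ∧ ¬ star d α.1 < α.1) := by
  unfold SCa at hx
  cases h : typeOf d C α <;> rw [h] at hx
  · left; simpa using hx
  · rcases (by simpa using hx : x = pv d α ∨ x = ph d α) with h' | h'
    · exact Or.inl h'
    · exact Or.inr (Or.inl ⟨h', typeOf_H h⟩)
  · right; right; exact ⟨by simpa using hx, typeOf_S h⟩

theorem mem_sum_map {f : ℕ × ℕ → Multiset (ℕ × ℕ)} :
    ∀ {L : List (ℕ × ℕ)} {x : ℕ × ℕ}, x ∈ (L.map f).sum ↔ ∃ β ∈ L, x ∈ f β := by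
  intro L
  induction L with
  | nil => simp
  | cons a t ih => intro x; simp [Multiset.mem_add, ih]

theorem le_sum_map {f : ℕ × ℕ → Multiset (ℕ × ℕ)} {L : List (ℕ × ℕ)} {β : ℕ × ℕ}
    (h : β ∈ L) : f β ≤ (L.map f).sum := by
  induction L with
  | nil => cases h
  | cons a t ih =>
    rcases List.mem_cons.mp h with rfl | h'
    · simpa using Multiset.le_add_right _ _
    · calc f β ≤ (t.map f).sum := ih h'
        _ ≤ f a + (t.map f).sum := Multiset.le_add_left _ _
        _ = ((a :: t).map f).sum := by simp

theorem SCa_le_SC {d : ℕ} {C : List (ℕ × ℕ)} {β : ℕ × ℕ} (h : β ∈ C) :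
    SCa d C β ≤ SC d C := le_sum_map h

theorem mem_SC {d : ℕ} {C : List (ℕ × ℕ)} {x : ℕ × ℕ} :
    x ∈ SC d C ↔ ∃ β ∈ C, x ∈ SCa d C β := mem_sum_map

theorem q_mem_SC {d : ℕ} {C : List (ℕ × ℕ)} {β : ℕ × ℕ} (h : β ∈ C) :
    qCa d C β ∈ SC d C := Multiset.mem_of_le (SCa_le_SC h) (q_mem_SCa d C β)

theorem card_SCa_le (d : ℕ) (C : List (ℕ × ℕ)) (β : ℕ × ℕ) :
    Multiset.card (SCa d C β) ≤ 2 := by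
  cases h : typeOf d C β <;> simp [SCa, h]

theorem card_sum_map_le (f : ℕ × ℕ → Multiset (ℕ × ℕ)) (hf : ∀ β, Multiset.card (f β) ≤ 2) :
    ∀ L : List (ℕ × ℕ), Multiset.card ((L.map f).sum) ≤ 2 * L.length := by
  intro L
  induction L with
  | nil => simp
  | cons a t ih =>
    simp only [List.map_cons, List.sum_cons, Multiset.card_add, List.length_cons]
    have := hf a
    omega

theorem card_SC_le (d : ℕ) (C : List (ℕ × ℕ)) : Multiset.card (SC d C) ≤ 2 * C.length :=
  card_sum_map_le _ (card_SCa_le d C) C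

theorem sum_map_append_singleton (f : ℕ × ℕ → Multiset (ℕ × ℕ)) (L₀ : List (ℕ × ℕ)) (x : ℕ × ℕ) :
    ((L₀ ++ [x]).map f).sum = (L₀.map f).sum + f x := by simp

/-! ### depth -/

theorem chain_length_le {S : Multiset (ℕ × ℕ)} {L : List (ℕ × ℕ)} (h : IsChainIn S L) :
    L.length ≤ S.toFinset.card := by
  have hnd : L.Nodup := nodup_of_chain' h.1
  have hsub : L.toFinset ⊆ S.toFinset := by
    intro x hx
    rw [List.mem_toFinset] at hx
    rw [Multiset.mem_toFinset]
    exact h.2 x hx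
  calc L.length = L.toFinset.card := (List.toFinset_card_of_nodup hnd).symm
    _ ≤ _ := Finset.card_le_card hsub

theorem depth_bddAbove (S : Multiset (ℕ × ℕ)) (q : ℕ × ℕ) :
    BddAbove {k | ∃ L, IsChainIn S L ∧ L.getLast? = some q ∧ L.length = k} := by
  refine ⟨S.toFinset.card, ?_⟩
  rintro k ⟨L, hL, -, rfl⟩
  exact chain_length_le hL

theorem depth_le_card {S : Multiset (ℕ × ℕ)} {q : ℕ × ℕ} : depth S q ≤ S.toFinset.card := by
  apply csSup_le'
  rintro k ⟨L, hL, -, rfl⟩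
  exact chain_length_le hL

theorem length_le_depth {S : Multiset (ℕ × ℕ)} {L : List (ℕ × ℕ)} {q : ℕ × ℕ}
    (h : IsChainIn S L) (hlast : L.getLast? = some q) : L.length ≤ depth S q :=
  le_csSup (depth_bddAbove S q) ⟨L, h, hlast, rfl⟩

theorem singleton_chain {S : Multiset (ℕ × ℕ)} {q : ℕ × ℕ} (hq : q ∈ S) : IsChainIn S [q] :=
  ⟨List.isChain_singleton q, by intro β hβ; rw [List.mem_singleton] at hβ; subst hβ; exact hq⟩

theorem exists_depth_chain {S : Multiset (ℕ × ℕ)} {q : ℕ × ℕ} (hq : q ∈ S) :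
    ∃ L, IsChainIn S L ∧ L.getLast? = some q ∧ L.length = depth S q := by
  have hne : {k | ∃ L, IsChainIn S L ∧ L.getLast? = some q ∧ L.length = k}.Nonempty :=
    ⟨1, [q], singleton_chain hq, rfl, rfl⟩
  exact Nat.sSup_mem hne (depth_bddAbove S q)

theorem depth_lt_depth {S : Multiset (ℕ × ℕ)} {q q' : ℕ × ℕ} (hq : q ∈ S) (hq' : q' ∈ S)
    (hpgt : pgt q q') : depth S q < depth S q' := by
  obtain ⟨L, hL, hlast, hlen⟩ := exists_depth_chain hq
  have hchain : IsChainIn S (L ++ [q']) := by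
    refine ⟨List.isChain_append.mpr ⟨hL.1, List.isChain_singleton _, ?_⟩, ?_⟩
    · intro x hx y hy
      rw [hlast] at hx
      rw [Option.mem_some_iff] at hx
      simp only [List.head?_cons, Option.mem_some_iff] at hy
      subst hx; subst hy
      exact hpgt
    · intro x hx
      rcases List.mem_append.mp hx with h | h
      · exact hL.2 x h
      · rw [List.mem_singleton] at h; subst h; exact hq'
  have h2 := length_le_depth hchain List.getLast?_concat
  rw [List.length_append, List.length_singleton] at h2
  omega

theorem mem_last_of_chain {L : List (ℕ × ℕ)} {q x : ℕ × ℕ} (hc : L.Chain' pgt)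
    (hlast : L.getLast? = some q) (hx : x ∈ L) : x = q ∨ pgt x q := by
  obtain ⟨L', rfl⟩ := List.getLast?_eq_some_iff.mp hlast
  rcases List.mem_append.mp hx with h | h
  · exact Or.inr ((List.pairwise_append.mp (pairwise_of_chain' hc)).2.2 x h q
      (List.mem_singleton_self q))
  · left; rwa [List.mem_singleton] at h

theorem depth_congr {S T : Multiset (ℕ × ℕ)} {q : ℕ × ℕ} (hS : q ∈ S) (hT : q ∈ T)
    (h : ∀ x, pgt x q → (x ∈ S ↔ x ∈ T)) : depth S q = depth T q := by
  unfold depth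
  congr 1
  ext k
  constructor
  · rintro ⟨L, ⟨hc, hm⟩, hlast, rfl⟩
    refine ⟨L, ⟨hc, fun x hx => ?_⟩, hlast, rfl⟩
    rcases mem_last_of_chain hc hlast hx with rfl | hp
    · exact hT
    · exact (h x hp).mp (hm x hx)
  · rintro ⟨L, ⟨hc, hm⟩, hlast, rfl⟩
    refine ⟨L, ⟨hc, fun x hx => ?_⟩, hlast, rfl⟩
    rcases mem_last_of_chain hc hlast hx with rfl | hp
    · exact hS
    · exact (h x hp).mpr (hm x hx)

/-! ### arithmetic -/

theorem inON_arith {d : ℕ} {v : Finset ℕ} {p : ℕ × ℕ} (h : inON d v p) :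
    1 ≤ p.1 ∧ p.1 ≤ 2*d ∧ 1 ≤ p.2 ∧ p.2 ≤ 2*d ∧ p.2 < p.1 ∧ p.1 < 2*d+1-p.2 := by
  obtain ⟨⟨a1, a2, a3, a4, _, _, a7⟩, ⟨_, _, _, _, _, _, b7⟩⟩ := h
  exact ⟨a1, a2, a3, a4, a7, b7⟩

theorem not_pgt_SCa {d : ℕ} {v : Finset ℕ} {C₂ : List (ℕ × ℕ)} {β γ x q : ℕ × ℕ}
    (hβ : inON d v β) (hγ : inON d v γ) (hbg : pgt β γ) (hx : x ∈ SCa d C₂ γ)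
    (hq : q = pv d β ∨ q = β) : ¬ pgt x q := by
  obtain ⟨b1, b2, b3, b4, b5, b6⟩ := inON_arith hβ
  obtain ⟨c1, c2, c3, c4, c5, c6⟩ := inON_arith hγ
  obtain ⟨g1, g2⟩ := hbg
  rintro ⟨p1, p2⟩
  rcases mem_SCa_cases hx with rfl | ⟨rfl, hh⟩ | ⟨rfl | rfl, hs⟩ <;>
    rcases hq with rfl | rfl <;>
    (try simp only [OG.pv, OG.ph, OG.hash, OG.star] at p1 p2) <;>
    (try simp only [OG.star] at hh) <;>
    (try simp only [OG.star] at hs) <;>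
    omega

theorem not_pgt_ph {d : ℕ} {v : Finset ℕ} {β L q : ℕ × ℕ} (hβ : inON d v β) (hL : inON d v L)
    (hbl : β = L ∨ pgt β L) (hq : q = pv d β ∨ q = β) : ¬ pgt (ph d L) q := by
  obtain ⟨b1, b2, b3, b4, b5, b6⟩ := inON_arith hβ
  obtain ⟨l1, l2, l3, l4, l5, l6⟩ := inON_arith hL
  rintro ⟨p1, p2⟩
  have hb1 : L.1 ≤ β.1 := by rcases hbl with rfl | ⟨h1, _⟩ <;> omega
  rcases hq with rfl | rfl <;> simp only [OG.pv, OG.ph, OG.star] at p1 p2 <;> omega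

/-! ### type S propagation -/

theorem exists_next {X : Type*} {R P : X → X → Prop} :
    ∀ {g : List X}, g.Chain' R → g.Pairwise P → ∀ {x}, x ∈ g → g.getLast? ≠ some x →
      ∃ y, R x y ∧ P x y := by
  intro g
  induction g with
  | nil => intro _ _ x hx; cases hx
  | cons a t ih =>
    intro hc hp x hx hlast
    cases t with
    | nil =>
      rw [List.mem_singleton] at hx
      subst hx
      exact absurd rfl hlast
    | cons b t' =>
      rcases List.mem_cons.mp hx with rfl | hx'
      · exact ⟨b, (List.isChain_cons_cons.mp hc).1, (List.pairwise_cons.mp hp).1 b List.mem_cons_self⟩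
      · exact ih hc.tail (List.pairwise_cons.mp hp).2 hx'
          (by rwa [List.getLast?_cons_cons] at hlast)

theorem vchain_append_left {d : ℕ} {v : Finset ℕ} {P Q : List (ℕ × ℕ)}
    (h : IsVChain d v (P ++ Q)) : IsVChain d v P :=
  ⟨(List.isChain_append.mp h.1).1, fun β hβ => h.2 β (List.mem_append_left _ hβ)⟩

theorem typeS_after {d : ℕ} {v : Finset ℕ} {C : List (ℕ × ℕ)} (hC : IsVChain d v C)
    {α γ : ℕ × ℕ} (hα : α ∈ C) (hγ : γ ∈ C) (hpgt : pgt α γ) (hS : typeOf d C α = VType.S) :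
    typeOf d C γ = VType.S := by
  have hPW : C.Pairwise pgt := pairwise_of_chain' hC.1
  have hnd : C.Nodup := nodup_of_chain' hC.1
  obtain ⟨a1, a2, a3, a4, a5, a6⟩ := inON_arith (hC.2 α hα)
  obtain ⟨c1, c2, c3, c4, c5, c6⟩ := inON_arith (hC.2 γ hγ)
  have hα1 : ¬ star d α.1 < α.1 := typeOf_S hS
  simp only [OG.star] at hα1
  obtain ⟨hg1, hg2⟩ := hpgt
  obtain ⟨g, hg, hγg⟩ := mem_components (d := d) hγ
  have hflat : (components d C).flatten = C := by unfold components; rw [List.flatten_splitBy]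
  have hgsub : ∀ x ∈ g, x ∈ C := by
    intro x hx
    have : x ∈ (components d C).flatten := List.mem_flatten.mpr ⟨g, hg, hx⟩
    rwa [hflat] at this
  have hgPW : g.Pairwise pgt := hPW.sublist (hflat ▸ List.sublist_flatten_of_mem hg)
  have hchain := List.isChain_of_mem_splitBy hg
  have hlast : g.getLast? = some γ := by
    by_contra hne
    obtain ⟨y, hR, hP⟩ := exists_next hchain hgPW hγg hne
    have hconn : Connected d γ y := of_decide_eq_true hR
    obtain ⟨-, hc2⟩ := hconn
    obtain ⟨hy1, -⟩ := hP
    simp only [OG.star] at hc2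
    omega
  have hodd : Odd g.length := by
    by_contra heven
    obtain ⟨G', rfl⟩ := List.getLast?_eq_some_iff.mp hlast
    have hG' : G' ≠ [] := by
      rintro rfl
      exact heven (by simp)
    have hyG : G'.getLast hG' ∈ G' := List.getLast_mem hG'
    set y := G'.getLast hG' with hydef
    have hconn : Connected d y γ := by
      have := (List.isChain_append.mp hchain).2.2 y
        (by rw [List.getLast?_eq_getLast hG']; exact rfl) γ rfl
      exact of_decide_eq_true this
    have hyP : pgt y γ := (List.pairwise_append.mp hgPW).2.2 y hyG γ (List.mem_singleton_self γ)
    obtain ⟨hcn1, hcn2⟩ := hconn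
    simp only [OG.star] at hcn2
    have hyC : y ∈ C := hgsub y (List.mem_append_left _ hyG)
    obtain ⟨y1, y2, y3, y4, y5, y6⟩ := inON_arith (hC.2 y hyC)
    have hy1 : α.1 < y.1 := by omega
    have hpgtyα : pgt y α := by
      rcases pairwise_or hPW hyC hα (by intro h; rw [h] at hy1; omega) with h | h
      · exact h
      · exact absurd h.1 (by omega)
    have hαg : α ∉ G' ++ [γ] := by
      intro hin
      have hform := typeOf_eq hnd hg hin
      rw [hS] at hform
      rw [if_neg (by rintro ⟨-, hodd'⟩; exact heven hodd')] at hform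
      exact absurd hform.symm (by simp)
    obtain ⟨p, s, hps⟩ := List.infix_of_mem_flatten hg
    rw [hflat] at hps
    rw [← hps] at hPW
    rcases List.mem_append.mp (by rw [← hps] at hα; exact hα) with hin | hin
    · rcases List.mem_append.mp hin with hin' | hin'
      · have := (List.pairwise_append.mp ((List.pairwise_append.mp hPW).1)).2.2 α hin' y
          (List.mem_append_left _ hyG)
        exact absurd this.1 (by omega)
      · exact hαg hin'
    · have := (List.pairwise_append.mp hPW).2.2 γ (List.mem_append_right _ hγg) α hin
      exact absurd this.1 (by omega)
  rw [typeOf_eq hnd hg hγg, if_pos ⟨hlast, hodd⟩, if_neg (by simp only [OG.star]; omega)]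

/-! ### q monotonicity and part (2) -/

theorem q_pgt {d : ℕ} {v : Finset ℕ} {C : List (ℕ × ℕ)} (hC : IsVChain d v C)
    {α γ : ℕ × ℕ} (hα : α ∈ C) (hγ : γ ∈ C) (hpgt : pgt α γ) :
    pgt (qCa d C α) (qCa d C γ) := by
  obtain ⟨a1, a2, a3, a4, a5, a6⟩ := inON_arith (hC.2 α hα)
  obtain ⟨c1, c2, c3, c4, c5, c6⟩ := inON_arith (hC.2 γ hγ)
  obtain ⟨hg1, hg2⟩ := hpgt
  by_cases hS : typeOf d C α = VType.S
  · have h2 := typeS_after hC hα hγ ⟨hg1, hg2⟩ hS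
    rw [show qCa d C α = α by simp [qCa, hS], show qCa d C γ = γ by simp [qCa, h2]]
    exact ⟨hg1, hg2⟩
  · rw [qCa_of_ne_S hS]
    rcases qCa_eq_or d C γ with hq | hq <;> rw [hq] <;>
      exact ⟨by simp only [OG.pv, OG.star]; omega, by simp only [OG.pv, OG.star]; omega⟩

theorem odepthC_lt {d : ℕ} {v : Finset ℕ} {C : List (ℕ × ℕ)} (hC : IsVChain d v C)
    {α γ : ℕ × ℕ} (hα : α ∈ C) (hγ : γ ∈ C) (hpgt : pgt α γ) :
    odepthC d C α < odepthC d C γ :=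
  depth_lt_depth (q_mem_SC hα) (q_mem_SC hγ) (q_pgt hC hα hγ hpgt)

/-! ### o-depth stability under snoc -/

theorem odepth_snoc {d : ℕ} {v : Finset ℕ} {C : List (ℕ × ℕ)} {γ β : ℕ × ℕ}
    (hCn : IsVChain d v (C ++ [γ])) (hβ : β ∈ C) :
    odepthC d (C ++ [γ]) β = odepthC d C β := by
  -- decompose C = C₀ ++ [L]
  rcases List.eq_nil_or_concat C with rfl | ⟨C₀, L, hCeq⟩
  · cases hβ
  rw [List.concat_eq_append] at hCeq
  subst hCeq
  have hC : IsVChain d v (C₀ ++ [L]) := vchain_append_left hCn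
  have hndC : (C₀ ++ [L]).Nodup := nodup_of_chain' hC.1
  have hndCn : ((C₀ ++ [L]) ++ [γ]).Nodup := nodup_of_chain' hCn.1
  have hγC : γ ∉ C₀ ++ [L] := fun h =>
    List.disjoint_of_nodup_append hndCn h (List.mem_singleton_self γ)
  have hLC : L ∈ C₀ ++ [L] := List.mem_append_right _ (List.mem_singleton_self L)
  have hγCn : γ ∈ (C₀ ++ [L]) ++ [γ] := List.mem_append_right _ (List.mem_singleton_self γ)
  have hβON := hC.2 β hβ
  have hLON := hC.2 L hLC
  have hγON := hCn.2 γ hγCn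
  have hPWn : ((C₀ ++ [L]) ++ [γ]).Pairwise pgt := pairwise_of_chain' hCn.1
  have hpgtγ : ∀ β' ∈ C₀ ++ [L], pgt β' γ := fun β' hb' =>
    (List.pairwise_append.mp hPWn).2.2 β' hb' γ (List.mem_singleton_self γ)
  have hpgtβL : β = L ∨ pgt β L := by
    rcases List.mem_append.mp hβ with h | h
    · exact Or.inr ((List.pairwise_append.mp (pairwise_of_chain' hC.1)).2.2 β h L
        (List.mem_singleton_self L))
    · rw [List.mem_singleton] at h; exact Or.inl h
  have hLnotC₀ : L ∉ C₀ := fun h =>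
    List.disjoint_of_nodup_append hndC h (List.mem_singleton_self L)
  obtain ⟨GS, G', hcomp, hcompn⟩ := components_snoc' d C₀ L γ
  -- key type stability facts
  have key : (∀ β' ∈ C₀ ++ [L], β' ≠ L → typeOf d ((C₀ ++ [L]) ++ [γ]) β'
        = typeOf d (C₀ ++ [L]) β') ∧
      (typeOf d ((C₀ ++ [L]) ++ [γ]) L = typeOf d (C₀ ++ [L]) L ∨
        (typeOf d (C₀ ++ [L]) L = VType.H ∧ typeOf d ((C₀ ++ [L]) ++ [γ]) L = VType.V)) := by
    by_cases hconn : Connected d L γ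
    · rw [if_pos hconn] at hcompn
      have hgLn : (G' ++ [L]) ++ [γ] ∈ components d ((C₀ ++ [L]) ++ [γ]) := by
        rw [hcompn]; exact List.mem_append_right _ (List.mem_singleton_self _)
      have hgL : G' ++ [L] ∈ components d (C₀ ++ [L]) := by
        rw [hcomp]; exact List.mem_append_right _ (List.mem_singleton_self _)
      constructor
      · intro β' hb' hne
        obtain ⟨g, hg, hbg⟩ := mem_components (d := d) hb'
        have hgor : g ∈ GS ∨ g = G' ++ [L] := by
          rw [hcomp] at hg
          rcases List.mem_append.mp hg with h | h
          · exact Or.inl h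
          · rw [List.mem_singleton] at h; exact Or.inr h
        rcases hgor with hgGS | rfl
        · have hg2 : g ∈ components d ((C₀ ++ [L]) ++ [γ]) := by
            rw [hcompn]; exact List.mem_append_left _ hgGS
          rw [typeOf_eq hndCn hg2 hbg, typeOf_eq hndC hg hbg]
        · have h1 : typeOf d (C₀ ++ [L]) β' = VType.V := by
            rw [typeOf_eq hndC hg hbg, if_neg]
            rintro ⟨hl, -⟩
            rw [List.getLast?_concat] at hl
            exact hne (Option.some.inj hl).symm
          have h2 : typeOf d ((C₀ ++ [L]) ++ [γ]) β' = VType.V := by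
            rw [typeOf_eq hndCn hgLn (List.mem_append_left _ hbg), if_neg]
            rintro ⟨hl, -⟩
            rw [List.getLast?_concat] at hl
            have : γ = β' := Option.some.inj hl
            exact hγC (this ▸ hb')
          rw [h1, h2]
      · have h2 : typeOf d ((C₀ ++ [L]) ++ [γ]) L = VType.V := by
          rw [typeOf_eq hndCn hgLn
            (List.mem_append_left _ (List.mem_append_right _ (List.mem_singleton_self L))),
            if_neg]
          rintro ⟨hl, -⟩
          rw [List.getLast?_concat] at hl
          exact hγC ((Option.some.inj hl) ▸ hLC)
        have hform := typeOf_eq hndC hgL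
          (List.mem_append_right _ (List.mem_singleton_self L))
        by_cases hodd : Odd (G' ++ [L]).length
        · rw [if_pos ⟨List.getLast?_concat, hodd⟩] at hform
          by_cases hstar : star d L.1 < L.1
          · rw [if_pos hstar] at hform
            exact Or.inr ⟨hform, h2⟩
          · -- type S contradicts Connected
            exfalso
            obtain ⟨-, hc2⟩ := hconn
            obtain ⟨hp1, -⟩ := hpgtγ L hLC
            exact hstar (lt_trans hc2 hp1)
        · rw [if_neg (fun hh => hodd hh.2)] at hform
          exact Or.inl (h2.trans hform.symm)
    · rw [if_neg hconn] at hcompn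
      have hall : ∀ β' ∈ C₀ ++ [L], typeOf d ((C₀ ++ [L]) ++ [γ]) β'
          = typeOf d (C₀ ++ [L]) β' := by
        intro β' hb'
        obtain ⟨g, hg, hbg⟩ := mem_components (d := d) hb'
        have hg2 : g ∈ components d ((C₀ ++ [L]) ++ [γ]) := by
          rw [hcomp] at hg
          rw [hcompn]
          rcases List.mem_append.mp hg with h | h
          · exact List.mem_append_left _ h
          · rw [List.mem_singleton] at h
            exact List.mem_append_right _ (by simp [h])
        rw [typeOf_eq hndCn hg2 hbg, typeOf_eq hndC (by rwa [hcomp] at hg ⊢) hbg]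
      exact ⟨fun β' hb' _ => hall β' hb', Or.inl (hall L hLC)⟩
  obtain ⟨hTS, hTSL⟩ := key
  -- q is stable
  have hqstable : qCa d ((C₀ ++ [L]) ++ [γ]) β = qCa d (C₀ ++ [L]) β := by
    by_cases hne : β = L
    · subst hne
      rcases hTSL with he | ⟨h1, h2⟩
      · exact qCa_eq_of_typeOf_eq he
      · rw [qCa_of_ne_S (by rw [h2]; simp), qCa_of_ne_S (by rw [h1]; simp)]
    · exact qCa_eq_of_typeOf_eq (hTS β hβ hne)
  -- sum decompositions
  have hMeq : C₀.map (SCa d ((C₀ ++ [L]) ++ [γ])) = C₀.map (SCa d (C₀ ++ [L])) := by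
    apply List.map_congr_left
    intro β' hb'
    exact SCa_eq_of_typeOf_eq (hTS β' (List.mem_append_left _ hb')
      (fun h => hLnotC₀ (h ▸ hb')))
  have hSCC : SC d (C₀ ++ [L]) = (C₀.map (SCa d (C₀ ++ [L]))).sum + SCa d (C₀ ++ [L]) L :=
    sum_map_append_singleton _ _ _
  have hSCn : SC d ((C₀ ++ [L]) ++ [γ]) = (C₀.map (SCa d (C₀ ++ [L]))).sum
      + SCa d ((C₀ ++ [L]) ++ [γ]) L + SCa d ((C₀ ++ [L]) ++ [γ]) γ := by
    have h1 : SC d ((C₀ ++ [L]) ++ [γ])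
        = ((C₀ ++ [L]).map (SCa d ((C₀ ++ [L]) ++ [γ]))).sum
          + SCa d ((C₀ ++ [L]) ++ [γ]) γ := sum_map_append_singleton _ _ _
    rw [h1, sum_map_append_singleton, hMeq]
  -- q memberships
  have hβCn : β ∈ (C₀ ++ [L]) ++ [γ] := List.mem_append_left _ hβ
  have hq1 : qCa d (C₀ ++ [L]) β ∈ SC d (C₀ ++ [L]) := q_mem_SC hβ
  have hq2 : qCa d (C₀ ++ [L]) β ∈ SC d ((C₀ ++ [L]) ++ [γ]) := by
    rw [← hqstable]; exact q_mem_SC hβCn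
  unfold odepthC
  rw [hqstable]
  apply depth_congr hq2 hq1
  intro x hx
  constructor
  · intro hmem
    rw [hSCn] at hmem
    rcases Multiset.mem_add.mp hmem with hmem' | hmem'
    · rcases Multiset.mem_add.mp hmem' with h | h
      · rw [hSCC]; exact Multiset.mem_add.mpr (Or.inl h)
      · -- x ∈ SCa Cn L
        rcases hTSL with he | ⟨h1, h2⟩
        · rw [hSCC]
          exact Multiset.mem_add.mpr (Or.inr (by rwa [← SCa_eq_of_typeOf_eq he]))
        · rw [show SCa d ((C₀ ++ [L]) ++ [γ]) L = {pv d L} by unfold SCa; rw [h2]] at h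
          rw [Multiset.mem_singleton] at h
          subst h
          rw [hSCC]
          refine Multiset.mem_add.mpr (Or.inr ?_)
          rw [show SCa d (C₀ ++ [L]) L = {pv d L, ph d L} by unfold SCa; rw [h1]]
          simp
    · exact absurd hx (not_pgt_SCa hβON hγON (hpgtγ β hβ) hmem' (qCa_eq_or d (C₀ ++ [L]) β))
  · intro hmem
    rw [hSCC] at hmem
    rw [hSCn]
    rcases Multiset.mem_add.mp hmem with h | h
    · exact Multiset.mem_add.mpr (Or.inl (Multiset.mem_add.mpr (Or.inl h)))
    · rcases hTSL with he | ⟨h1, h2⟩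
      · exact Multiset.mem_add.mpr (Or.inl (Multiset.mem_add.mpr (Or.inr
          (by rwa [SCa_eq_of_typeOf_eq he]))))
      · rw [show SCa d (C₀ ++ [L]) L = {pv d L, ph d L} by unfold SCa; rw [h1]] at h
        rcases (by simpa using h : x = pv d L ∨ x = ph d L) with rfl | rfl
        · refine Multiset.mem_add.mpr (Or.inl (Multiset.mem_add.mpr (Or.inr ?_)))
          rw [show SCa d ((C₀ ++ [L]) ++ [γ]) L = {pv d L} by unfold SCa; rw [h2]]
          simp
        · exact absurd hx (not_pgt_ph hβON hLON hpgtβL (qCa_eq_or d (C₀ ++ [L]) β))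

theorem odepth_prefix {d : ℕ} {v : Finset ℕ} {P : List (ℕ × ℕ)} :
    ∀ {Q : List (ℕ × ℕ)}, IsVChain d v (P ++ Q) → ∀ {β : ℕ × ℕ}, β ∈ P →
      odepthC d (P ++ Q) β = odepthC d P β := by
  intro Q
  induction Q using List.reverseRecOn with
  | nil => intro h β hβ; simp
  | append_singleton Q' γ ih =>
    intro h β hβ
    have hre : P ++ (Q' ++ [γ]) = (P ++ Q') ++ [γ] := by simp
    rw [hre] at h ⊢
    rw [odepth_snoc h (List.mem_append_left _ hβ)]
    exact ih (vchain_append_left h) hβ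

/-! ### odepthM -/

theorem odepthC_le_bound {d : ℕ} {v : Finset ℕ} {S : Multiset (ℕ × ℕ)} {C : List (ℕ × ℕ)}
    {α : ℕ × ℕ} (hvc : IsVChain d v C) (hmem : ∀ β ∈ C, β ∈ S) (hα : α ∈ C) :
    odepthC d C α ≤ 2 * S.toFinset.card := by
  calc odepthC d C α ≤ (SC d C).toFinset.card := depth_le_card
    _ ≤ Multiset.card (SC d C) := Multiset.toFinset_card_le _
    _ ≤ 2 * C.length := card_SC_le d C
    _ ≤ 2 * S.toFinset.card := by
        have := chain_length_le (S := S) (L := C) ⟨hvc.1, hmem⟩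
        omega

theorem odepthM_bddAbove (d : ℕ) (v : Finset ℕ) (S : Multiset (ℕ × ℕ)) (α : ℕ × ℕ) :
    BddAbove {k | ∃ C, IsVChain d v C ∧ (∀ β ∈ C, β ∈ S) ∧ α ∈ C ∧ odepthC d C α = k} := by
  refine ⟨2 * S.toFinset.card, ?_⟩
  rintro k ⟨C, h1, h2, h3, rfl⟩
  exact odepthC_le_bound h1 h2 h3

theorem exists_odepthM {d : ℕ} {v : Finset ℕ} {S : Multiset (ℕ × ℕ)}
    (hS : ∀ α ∈ S, inON d v α) {α : ℕ × ℕ} (hα : α ∈ S) :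
    ∃ C, IsVChain d v C ∧ (∀ β ∈ C, β ∈ S) ∧ α ∈ C ∧ odepthC d C α = odepthM d v S α := by
  have hne : {k | ∃ C, IsVChain d v C ∧ (∀ β ∈ C, β ∈ S) ∧ α ∈ C
      ∧ odepthC d C α = k}.Nonempty := by
    refine ⟨odepthC d [α] α, [α], ⟨List.isChain_singleton α, ?_⟩, ?_, List.mem_singleton_self α, rfl⟩
    · intro β hβ; rw [List.mem_singleton] at hβ; rw [hβ]; exact hS α hα
    · intro β hβ; rw [List.mem_singleton] at hβ; rw [hβ]; exact hα
  exact Nat.sSup_mem hne (odepthM_bddAbove d v S α)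

theorem le_odepthM {d : ℕ} {v : Finset ℕ} {S : Multiset (ℕ × ℕ)} {C : List (ℕ × ℕ)}
    {α : ℕ × ℕ} (hC : IsVChain d v C) (hmem : ∀ β ∈ C, β ∈ S) (hα : α ∈ C) :
    odepthC d C α ≤ odepthM d v S α :=
  le_csSup (odepthM_bddAbove d v S α) ⟨C, hC, hmem, hα, rfl⟩

theorem part1 {d : ℕ} {v : Finset ℕ} {S : Multiset (ℕ × ℕ)}
    (hS : ∀ α ∈ S, inON d v α) {α : ℕ × ℕ} (hα : α ∈ S) :
    ∃ C : List (ℕ × ℕ), IsVChain d v C ∧ (∀ β ∈ C, β ∈ S) ∧ C.getLast? = some α ∧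
      odepthM d v S α = odepthC d C α := by
  obtain ⟨C, hC, hmem, hαC, hod⟩ := exists_odepthM hS hα
  obtain ⟨l₁, l₂, rfl⟩ := List.append_of_mem hαC
  have hre : l₁ ++ α :: l₂ = (l₁ ++ [α]) ++ l₂ := by simp
  have hαmem : α ∈ l₁ ++ [α] := List.mem_append_right _ (List.mem_singleton_self α)
  refine ⟨l₁ ++ [α], vchain_append_left (by rw [← hre]; exact hC),
    fun β hβ' => hmem β (by rw [hre]; exact List.mem_append_left _ hβ'),
    List.getLast?_concat, ?_⟩
  rw [← hod, hre]
  exact odepth_prefix (by rw [← hre]; exact hC) hαmem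

theorem part3 {d : ℕ} {v : Finset ℕ} {S : Multiset (ℕ × ℕ)}
    (hS : ∀ α ∈ S, inON d v α) {α γ : ℕ × ℕ} (hα : α ∈ S) (hγ : γ ∈ S) (hpgt : pgt α γ) :
    odepthM d v S α < odepthM d v S γ := by
  obtain ⟨C, hC, hmem, hlast, hod⟩ := part1 hS hα
  have hαC : α ∈ C := List.mem_of_getLast? hlast
  have hCn : IsVChain d v (C ++ [γ]) := by
    refine ⟨List.isChain_append.mpr ⟨hC.1, List.isChain_singleton _, ?_⟩, ?_⟩
    · intro x hx y hy
      rw [hlast] at hx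
      rw [Option.mem_some_iff] at hx
      simp only [List.head?_cons, Option.mem_some_iff] at hy
      subst hx; subst hy
      exact hpgt
    · intro β hβ
      rcases List.mem_append.mp hβ with h | h
      · exact hC.2 β h
      · rw [List.mem_singleton] at h; rw [h]; exact hS γ hγ
  have hmemn : ∀ β ∈ C ++ [γ], β ∈ S := by
    intro β hβ
    rcases List.mem_append.mp hβ with h | h
    · exact hmem β h
    · rw [List.mem_singleton] at h; subst h; exact hγ
  have h1 : odepthC d (C ++ [γ]) α = odepthC d C α := odepth_snoc hCn hαC
  have h2 : odepthC d (C ++ [γ]) α < odepthC d (C ++ [γ]) γ :=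
    odepthC_lt hCn (List.mem_append_left _ hαC)
      (List.mem_append_right _ (List.mem_singleton_self γ)) hpgt
  have h3 : odepthC d (C ++ [γ]) γ ≤ odepthM d v S γ :=
    le_odepthM hCn hmemn (List.mem_append_right _ (List.mem_singleton_self γ))
  rw [hod, ← h1]
  exact lt_of_lt_of_le h2 h3

end Aux

open OG in
/-- basic facts about o-depths in monomials of `ON(v)`. -/
theorem stmt8 (d : ℕ) (hd : 0 < d) (v : Finset ℕ) (hv : v ∈ Iset d) :
    -- (1)
    (∀ S : Multiset (ℕ × ℕ), (∀ α ∈ S, inON d v α) → ∀ α ∈ S,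
      ∃ C : List (ℕ × ℕ), IsVChain d v C ∧ (∀ β ∈ C, β ∈ S) ∧ C.getLast? = some α ∧
        odepthM d v S α = odepthC d C α) ∧
    -- (2)
    (∀ C : List (ℕ × ℕ), IsVChain d v C → ∀ α ∈ C, ∀ γ ∈ C, pgt α γ →
        odepthC d C α < odepthC d C γ) ∧
    -- (3)
    (∀ S : Multiset (ℕ × ℕ), (∀ α ∈ S, inON d v α) → ∀ α ∈ S, ∀ γ ∈ S, pgt α γ →
        odepthM d v S α < odepthM d v S γ) ∧
    -- (4)
    (∀ S : Multiset (ℕ × ℕ), (∀ α ∈ S, inON d v α) → ∀ α ∈ S, ∀ γ ∈ S,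
        (pgt α γ ∨ pgt γ α) → odepthM d v S α ≠ odepthM d v S γ) := by
  refine ⟨?_, ?_, ?_, ?_⟩
  · intro S hS α hα
    exact part1 hS hα
  · intro C hC α hα γ hγ hpgt
    exact odepthC_lt hC hα hγ hpgt
  · intro S hS α hα γ hγ hpgt
    exact part3 hS hα hγ hpgt
  · intro S hS α hα γ hγ h
    rcases h with h | h
    · exact ne_of_lt (part3 hS hα hγ h)
    · exact ne_of_gt (part3 hS hγ hα h)
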